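/- arXiv:2604.16671 — 4 statements merged into one kernel-verified Lean document; each statement's English description precedes it below -/
import Mathlib

section
/- Under the setup of the MEA power analysis with equal trigger rates r ∈ (0,1), ℓ variants per experiment (ℓ ≥ 1), and k ≥ 1 experiments, the variance ratio ((1+(ℓ−1)r)^k − (1−r)^k) / (ℓ^k (1 − (1−r)^k)) is at most 1. -/
lemma mea_core (k : ℕ) (r ℓ : ℝ) (hr0 : 0 ≤ r) (hr1 : r ≤ 1) (hℓ : 1 ≤ ℓ) :
    (1 + (ℓ - 1) * r) ^ k - (1 - r) ^ k ≤ ℓ ^ k * (1 - (1 - r) ^ k) := by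
  induction k with
  | zero => simp
  | succ k ih =>
    have ha : (0:ℝ) ≤ 1 - r := by linarith
    have hA : (0:ℝ) ≤ 1 + (ℓ - 1) * r := by nlinarith
    have hAℓ : 1 + (ℓ - 1) * r ≤ ℓ := by nlinarith
    have haA : 1 - r ≤ 1 + (ℓ - 1) * r := by nlinarith
    have hpow : (1 - r) ^ k ≤ (1 + (ℓ - 1) * r) ^ k := pow_le_pow_left₀ ha haA k
    have hak : (0:ℝ) ≤ (1 - r) ^ k := pow_nonneg ha k
    have hℓk : (1:ℝ) ≤ ℓ ^ k := one_le_pow₀ hℓ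
    have hℓ0 : (0:ℝ) ≤ ℓ := by linarith
    rw [pow_succ, pow_succ, pow_succ]
    nlinarith [mul_le_mul_of_nonneg_left ih hA, pow_nonneg hA k,
      mul_nonneg hak hr0, mul_le_mul_of_nonneg_right hℓk (mul_nonneg hak hr0)]

/-- The MEA-to-factorial variance ratio is at most 1: for equal trigger rates
`r ∈ (0,1)`, `ℓ ≥ 1` variants per experiment, and `k ≥ 1` experiments,
`((1+(ℓ−1)r)^k − (1−r)^k) / (ℓ^k (1 − (1−r)^k)) ≤ 1`. -/
theorem mea_variance_ratio_le_one
    (k : ℕ) (hk : 1 ≤ k) (r ℓ : ℝ) (hr0 : 0 < r) (hr1 : r < 1) (hℓ : 1 ≤ ℓ) :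
    ((1 + (ℓ - 1) * r) ^ k - (1 - r) ^ k) / (ℓ ^ k * (1 - (1 - r) ^ k)) ≤ 1 := by
  have ha : (1 - r) ^ k < 1 := by
    apply pow_lt_one₀ (by linarith) (by linarith) (by omega)
  have hden : 0 < ℓ ^ k * (1 - (1 - r) ^ k) := by
    apply mul_pos (pow_pos (by linarith) k) (by linarith)
  rw [div_le_one hden]
  linarith [mea_core k r ℓ hr0.le hr1.le hℓ]
end

section
/- Cramér's V statistic V = sqrt(χ² / (N·min(k₁−1, k₂−1))) satisfies 0 ≤ V ≤ 1 when χ² is the Pearson chi-squared statistic of a k₁×k₂ contingency table with total count N. -/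
/-- Cramér's `V = sqrt(chi2 / (N · min(k₁−1, k₂−1)))` satisfies `0 ≤ V ≤ 1`, where
`chi2` is the Pearson chi-squared statistic of a `k₁ × k₂` contingency table of
nonnegative counts with total `N > 0` and positive expected counts. -/
theorem cramers_V_bounds
    (k₁ k₂ : ℕ) (hk₁ : 2 ≤ k₁) (hk₂ : 2 ≤ k₂)
    (n : Fin k₁ → Fin k₂ → ℝ) (hn : ∀ i j, 0 ≤ n i j)
    (N : ℝ) (hN : N = ∑ i, ∑ j, n i j) (hNpos : 0 < N)
    (e : Fin k₁ → Fin k₂ → ℝ)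
    (he : ∀ i j, e i j = (∑ j', n i j') * (∑ i', n i' j) / N)
    (hepos : ∀ i j, 0 < e i j)
    (chi2 : ℝ) (hχ : chi2 = ∑ i, ∑ j, (n i j - e i j) ^ 2 / e i j)
    (V : ℝ) (hV : V = Real.sqrt (chi2 / (N * (min (k₁ - 1) (k₂ - 1) : ℕ)))) :
    0 ≤ V ∧ V ≤ 1 := by
  have i0 : Fin k₁ := ⟨0, by omega⟩
  have j0 : Fin k₂ := ⟨0, by omega⟩
  set r : Fin k₁ → ℝ := fun i => ∑ j', n i j' with hr_def
  set c : Fin k₂ → ℝ := fun j => ∑ i', n i' j with hc_def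
  have hrnn : ∀ i, 0 ≤ r i := fun i => Finset.sum_nonneg fun j _ => hn i j
  have hcnn : ∀ j, 0 ≤ c j := fun j => Finset.sum_nonneg fun i _ => hn i j
  have hrc : ∀ i j, 0 < r i * c j := by
    intro i j
    have h := hepos i j
    rw [he] at h
    have heq : r i * c j = (r i * c j / N) * N := by field_simp
    rw [heq]
    exact mul_pos h hNpos
  have hrpos : ∀ i, 0 < r i := by
    intro i; by_contra h; push_neg at h
    nlinarith [hrc i j0, hcnn j0]
  have hcpos : ∀ j, 0 < c j := by
    intro j; by_contra h; push_neg at h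
    nlinarith [hrc i0 j, hrnn i0]
  have hnlec : ∀ i j, n i j ≤ c j :=
    fun i j => Finset.single_le_sum (fun i' _ => hn i' j) (Finset.mem_univ i)
  have hnler : ∀ i j, n i j ≤ r i :=
    fun i j => Finset.single_le_sum (fun j' _ => hn i j') (Finset.mem_univ j)
  have hNc : N = ∑ j, c j := by rw [hN]; exact Finset.sum_comm
  -- sum of expected counts is N
  have hsume : ∑ i, ∑ j, e i j = N := by
    have hrow : ∀ i, ∑ j, e i j = r i := by
      intro i
      simp only [he]
      rw [← Finset.sum_div, ← Finset.mul_sum]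
      rw [show (∑ j, (∑ i', n i' j)) = N from hNc.symm]
      field_simp
      rfl
    simp_rw [hrow]
    exact hN.symm
  -- chi2 identity
  have hterm : ∀ i j, (n i j - e i j) ^ 2 / e i j
      = (n i j) ^ 2 / e i j - 2 * n i j + e i j := by
    intro i j
    have h := (hepos i j).ne'
    field_simp
    ring
  have hchi : chi2 = (∑ i, ∑ j, (n i j) ^ 2 / e i j) - N := by
    rw [hχ]
    simp_rw [hterm]
    have hsplit : ∑ i, ∑ j, ((n i j) ^ 2 / e i j - 2 * n i j + e i j)
        = (∑ i, ∑ j, (n i j) ^ 2 / e i j) - 2 * (∑ i, ∑ j, n i j)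
          + (∑ i, ∑ j, e i j) := by
      simp [Finset.sum_add_distrib, Finset.sum_sub_distrib, Finset.mul_sum]
    rw [hsplit, ← hN, hsume]
    ring
  -- pointwise bounds
  have hptr : ∀ i j, (n i j) ^ 2 / e i j ≤ N * (n i j / r i) := by
    intro i j
    rw [he, div_div_eq_mul_div, mul_div_assoc' N (n i j) (r i),
      div_le_div_iff₀ (hrc i j) (hrpos i)]
    nlinarith [mul_nonneg (mul_nonneg hNpos.le (hrpos i).le)
      (mul_nonneg (hn i j) (sub_nonneg.mpr (hnlec i j)))]
  have hptc : ∀ i j, (n i j) ^ 2 / e i j ≤ N * (n i j / c j) := by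
    intro i j
    rw [he, div_div_eq_mul_div, mul_div_assoc' N (n i j) (c j),
      div_le_div_iff₀ (hrc i j) (hcpos j)]
    nlinarith [mul_nonneg (mul_nonneg hNpos.le (hcpos j).le)
      (mul_nonneg (hn i j) (sub_nonneg.mpr (hnler i j)))]
  -- row bound
  have hrowb : ∀ i, ∑ j, (n i j) ^ 2 / e i j ≤ N := by
    intro i
    calc ∑ j, (n i j) ^ 2 / e i j ≤ ∑ j, N * (n i j / r i) :=
          Finset.sum_le_sum fun j _ => hptr i j
      _ = N := by
          have h1 : ∑ j, N * (n i j / r i) = N / r i * ∑ j, n i j := by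
            rw [Finset.mul_sum]; exact Finset.sum_congr rfl fun j _ => by ring
          rw [h1, show (∑ j, n i j) = r i from rfl, div_mul_cancel₀ _ (hrpos i).ne']
  have hcolb : ∀ j, ∑ i, (n i j) ^ 2 / e i j ≤ N := by
    intro j
    calc ∑ i, (n i j) ^ 2 / e i j ≤ ∑ i, N * (n i j / c j) :=
          Finset.sum_le_sum fun i _ => hptc i j
      _ = N := by
          have h1 : ∑ i, N * (n i j / c j) = N / c j * ∑ i, n i j := by
            rw [Finset.mul_sum]; exact Finset.sum_congr rfl fun i _ => by ring
          rw [h1, show (∑ i, n i j) = c j from rfl, div_mul_cancel₀ _ (hcpos j).ne']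
  have hB1 : chi2 ≤ N * ((k₁ : ℝ) - 1) := by
    have hsum : ∑ i, ∑ j, (n i j) ^ 2 / e i j ≤ (k₁ : ℝ) * N := by
      calc ∑ i, ∑ j, (n i j) ^ 2 / e i j ≤ ∑ _i : Fin k₁, N :=
            Finset.sum_le_sum fun i _ => hrowb i
        _ = (k₁ : ℝ) * N := by simp [Finset.sum_const, nsmul_eq_mul]
    rw [hchi]; nlinarith
  have hB2 : chi2 ≤ N * ((k₂ : ℝ) - 1) := by
    have hswap : ∑ i, ∑ j, (n i j) ^ 2 / e i j = ∑ j, ∑ i, (n i j) ^ 2 / e i j :=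
      Finset.sum_comm
    have hsum : ∑ i, ∑ j, (n i j) ^ 2 / e i j ≤ (k₂ : ℝ) * N := by
      rw [hswap]
      calc ∑ j, ∑ i, (n i j) ^ 2 / e i j ≤ ∑ _j : Fin k₂, N :=
            Finset.sum_le_sum fun j _ => hcolb j
        _ = (k₂ : ℝ) * N := by simp [Finset.sum_const, nsmul_eq_mul]
    rw [hchi]; nlinarith
  -- the denominator
  set m : ℕ := min (k₁ - 1) (k₂ - 1) with hm
  have hm1 : 1 ≤ m := by omega
  have hmR : (1 : ℝ) ≤ (m : ℝ) := by exact_mod_cast hm1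
  have hDpos : 0 < N * (m : ℝ) := mul_pos hNpos (by linarith)
  have hc1 : ((k₁ - 1 : ℕ) : ℝ) = (k₁ : ℝ) - 1 := by
    rw [Nat.cast_sub (by omega)]; norm_num
  have hc2 : ((k₂ - 1 : ℕ) : ℝ) = (k₂ : ℝ) - 1 := by
    rw [Nat.cast_sub (by omega)]; norm_num
  have hchi2le : chi2 ≤ N * (m : ℝ) := by
    rcases min_cases (k₁ - 1) (k₂ - 1) with ⟨hmin, _⟩ | ⟨hmin, _⟩
    · rw [hm, hmin, hc1]; exact hB1
    · rw [hm, hmin, hc2]; exact hB2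
  constructor
  · rw [hV]; exact Real.sqrt_nonneg _
  · rw [hV]
    apply Real.sqrt_le_one.mpr
    rw [div_le_one hDpos]
    exact hchi2le
end

section
/- If S is independent of the pair (A₁, A₂) and A₁, A₂ are independent uniform assignments, then for any trigger state s with P(S=s) > 0 and any measurable outcome function, the conditional mean E[Y | A₁=a₁, A₂=a₂, S=s] is identified from observed data in stratum s, and the stratified estimand Σ_s P(S=s|S∈I)·(E[Y|A=t,S=s] − E[Y|A=c,S=s]) equals E[Y(t) − Y(c) | S ∈ I] under consistency of potential outcomes (Y = Y(A)) and the exclusion restriction that Y(a) depends only on the arms of triggered experiments. -/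
open MeasureTheory ProbabilityTheory

/-- Identification of the post-stratified estimand (two overlapping experiments).
Under consistency (`Yobs = Y (A ·) ·`), randomization (`A` independent of the
pair `(S, Y a)` for every arm combination `a`), the exclusion restriction that
the potential outcome depends only on the arms of triggered experiments, and
positivity, the stratified weighted estimand
`∑_{s ∈ I} P(S=s | S∈I) · (E[Yobs | A=t, S=s] − E[Yobs | A=c, S=s])`
equals the causal effect `E[Y(t) − Y(c) | S ∈ I]`; moreover each conditional
mean `E[Yobs | A=a, S=s]` is identified as `E[Y(a) | S=s]`. -/
theorem post_stratified_identification
    {Ω : Type*} [MeasureSpace Ω] [IsProbabilityMeasure (ℙ : Measure Ω)]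
    {α₁ α₂ : Type*} [MeasurableSpace α₁] [MeasurableSpace α₂]
    [MeasurableSingletonClass α₁] [MeasurableSingletonClass α₂]
    (A : Ω → α₁ × α₂) (S : Ω → Bool × Bool)
    (hA : Measurable A) (hS : Measurable S)
    (Y : α₁ × α₂ → Ω → ℝ) (hYmeas : ∀ a, Measurable (Y a))
    (hYint : ∀ a, Integrable (Y a) ℙ)
    (Yobs : Ω → ℝ)
    -- consistency
    (hcons : ∀ ω, Yobs ω = Y (A ω) ω)
    -- randomization: A is independent of the pair (S, Y a) for each a
    (hrand : ∀ a : α₁ × α₂, IndepFun A (fun ω => (S ω, Y a ω)) ℙ)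
    -- exclusion restriction: Y a depends only on arms of triggered experiments
    (hexcl₁ : ∀ ω, (S ω).1 = false → ∀ a₁ a₁' a₂, Y (a₁, a₂) ω = Y (a₁', a₂) ω)
    (hexcl₂ : ∀ ω, (S ω).2 = false → ∀ a₁ a₂ a₂', Y (a₁, a₂) ω = Y (a₁, a₂') ω)
    (t c : α₁ × α₂) (I : Finset (Bool × Bool))
    (hI : 0 < ℙ (S ⁻¹' ↑I))
    (hposA : ∀ s ∈ I, 0 < ℙ (A ⁻¹' {t} ∩ S ⁻¹' {s}) ∧
                      0 < ℙ (A ⁻¹' {c} ∩ S ⁻¹' {s}))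
    (hposS : ∀ s ∈ I, 0 < ℙ (S ⁻¹' {s})) :
    (∀ a : α₁ × α₂, ∀ s ∈ I, 0 < ℙ (A ⁻¹' {a} ∩ S ⁻¹' {s}) →
      ∫ ω, Yobs ω ∂(ℙ[|A ⁻¹' {a} ∩ S ⁻¹' {s}])
        = ∫ ω, Y a ω ∂(ℙ[|S ⁻¹' {s}])) ∧
    ∑ s ∈ I,
        (ℙ (S ⁻¹' {s}) / ℙ (S ⁻¹' ↑I)).toReal
          * ((∫ ω, Yobs ω ∂(ℙ[|A ⁻¹' {t} ∩ S ⁻¹' {s}]))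
             - ∫ ω, Yobs ω ∂(ℙ[|A ⁻¹' {c} ∩ S ⁻¹' {s}]))
      = ∫ ω, (Y t ω - Y c ω) ∂(ℙ[|S ⁻¹' ↑I]) := by
  classical
  have hImeas : MeasurableSet (↑I : Set (Bool × Bool)) := I.finite_toSet.measurableSet
  -- Part 1: identification of each conditional mean
  have key : ∀ a : α₁ × α₂, ∀ s : Bool × Bool, 0 < ℙ (A ⁻¹' {a} ∩ S ⁻¹' {s}) →
      ∫ ω, Yobs ω ∂(ℙ[|A ⁻¹' {a} ∩ S ⁻¹' {s}])
        = ∫ ω, Y a ω ∂(ℙ[|S ⁻¹' {s}]) := by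
    intro a s hpos
    have hmA : MeasurableSet (A ⁻¹' {a}) := hA (measurableSet_singleton a)
    have hmS : MeasurableSet (S ⁻¹' {s}) := hS (measurableSet_singleton s)
    have hmE : MeasurableSet (A ⁻¹' {a} ∩ S ⁻¹' {s}) := hmA.inter hmS
    have hAS : IndepFun A S ℙ := (hrand a).comp measurable_id measurable_fst
    have hmul : ℙ (A ⁻¹' {a} ∩ S ⁻¹' {s}) = ℙ (A ⁻¹' {a}) * ℙ (S ⁻¹' {s}) :=
      hAS.measure_inter_preimage_eq_mul _ _ (measurableSet_singleton a)
        (measurableSet_singleton s)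
    have hApos : ℙ (A ⁻¹' {a}) ≠ 0 := by
      intro h; rw [hmul, h, zero_mul] at hpos; exact lt_irrefl _ hpos
    have hSpos : ℙ (S ⁻¹' {s}) ≠ 0 := by
      intro h; rw [hmul, h, mul_zero] at hpos; exact lt_irrefl _ hpos
    have hAfin : ℙ (A ⁻¹' {a}) ≠ ⊤ := measure_ne_top _ _
    have hSfin : ℙ (S ⁻¹' {s}) ≠ ⊤ := measure_ne_top _ _
    -- consistency on the event
    have h1 : ∫ ω in A ⁻¹' {a} ∩ S ⁻¹' {s}, Yobs ω ∂ℙ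
        = ∫ ω in A ⁻¹' {a} ∩ S ⁻¹' {s}, Y a ω ∂ℙ := by
      refine setIntegral_congr_fun hmE (fun ω hω => ?_)
      rw [hcons ω]
      have : A ω = a := hω.1
      rw [this]
    -- independence for the integral
    have h2 : ∫ ω in A ⁻¹' {a} ∩ S ⁻¹' {s}, Y a ω ∂ℙ
        = (ℙ (A ⁻¹' {a})).toReal * ∫ ω in S ⁻¹' {s}, Y a ω ∂ℙ := by
      have hφ : Measurable (Set.indicator ({a} : Set (α₁ × α₂)) (fun _ => (1 : ℝ))) :=
        (measurable_const.indicator (measurableSet_singleton a))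
      have hψ : Measurable (fun p : (Bool × Bool) × ℝ =>
          Set.indicator ({s} : Set (Bool × Bool)) (fun _ => (1 : ℝ)) p.1 * p.2) :=
        ((measurable_const.indicator (measurableSet_singleton s)).comp measurable_fst).mul
          measurable_snd
      have hindep : IndepFun
          (fun ω => Set.indicator ({a} : Set (α₁ × α₂)) (fun _ => (1 : ℝ)) (A ω))
          (fun ω => Set.indicator ({s} : Set (Bool × Bool)) (fun _ => (1 : ℝ)) (S ω) * Y a ω)
          ℙ := (hrand a).comp hφ hψ
      have hmulint := hindep.integral_mul_eq_mul_integral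
        ((hφ.comp hA).aestronglyMeasurable)
        (((measurable_const.indicator (measurableSet_singleton s)).comp hS).mul
          (hYmeas a)).aestronglyMeasurable
      have e1 : (fun ω => Set.indicator ({a} : Set (α₁ × α₂)) (fun _ => (1 : ℝ)) (A ω)
            * (Set.indicator ({s} : Set (Bool × Bool)) (fun _ => (1 : ℝ)) (S ω) * Y a ω))
          = Set.indicator (A ⁻¹' {a} ∩ S ⁻¹' {s}) (Y a) := by
        funext ω
        by_cases hAa : A ω ∈ ({a} : Set (α₁ × α₂)) <;>
          by_cases hSs : S ω ∈ ({s} : Set (Bool × Bool)) <;>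
          simp [Set.indicator_apply, hAa, hSs, Set.mem_inter_iff]
      have e2 : (fun ω => Set.indicator ({a} : Set (α₁ × α₂)) (fun _ => (1 : ℝ)) (A ω))
          = Set.indicator (A ⁻¹' {a}) (fun _ => (1 : ℝ)) := by
        funext ω; by_cases hAa : A ω ∈ ({a} : Set (α₁ × α₂)) <;>
          simp [Set.indicator_apply, hAa]
      have e3 : (fun ω => Set.indicator ({s} : Set (Bool × Bool)) (fun _ => (1 : ℝ)) (S ω)
            * Y a ω) = Set.indicator (S ⁻¹' {s}) (Y a) := by
        funext ω; by_cases hSs : S ω ∈ ({s} : Set (Bool × Bool)) <;>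
          simp [Set.indicator_apply, hSs]
      simp only [Pi.mul_def] at hmulint
      rw [e1, e2, e3] at hmulint
      rw [integral_indicator hmE, integral_indicator hmA, integral_indicator hmS]
        at hmulint
      rw [hmulint]
      congr 1
      simp [setIntegral_const, measureReal_def]
    -- rewrite conditional integrals
    rw [ProbabilityTheory.cond, ProbabilityTheory.cond, integral_smul_measure,
      integral_smul_measure, h1, h2, hmul]
    simp only [smul_eq_mul]
    have ha0 : (ℙ (A ⁻¹' {a})).toReal ≠ 0 := by
      simp [ENNReal.toReal_ne_zero, hApos, hAfin]
    have hs0 : (ℙ (S ⁻¹' {s})).toReal ≠ 0 := by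
      simp [ENNReal.toReal_ne_zero, hSpos, hSfin]
    rw [ENNReal.mul_inv (Or.inl hApos) (Or.inl hAfin), ENNReal.toReal_mul,
      ENNReal.toReal_inv, ENNReal.toReal_inv]
    field_simp
  refine ⟨fun a s _ => key a s, ?_⟩
  -- Part 2: the stratified sum
  have hmSset : ∀ s : Bool × Bool, MeasurableSet (S ⁻¹' {s}) :=
    fun s => hS (measurableSet_singleton s)
  have hint : Integrable (fun ω => Y t ω - Y c ω) ℙ := (hYint t).sub (hYint c)
  have hrw : ∀ s ∈ I,
      (ℙ (S ⁻¹' {s}) / ℙ (S ⁻¹' ↑I)).toReal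
          * ((∫ ω, Yobs ω ∂(ℙ[|A ⁻¹' {t} ∩ S ⁻¹' {s}]))
             - ∫ ω, Yobs ω ∂(ℙ[|A ⁻¹' {c} ∩ S ⁻¹' {s}]))
        = ((ℙ (S ⁻¹' ↑I))⁻¹).toReal * ∫ ω in S ⁻¹' {s}, (Y t ω - Y c ω) ∂ℙ := by
    intro s hs
    rw [key t s (hposA s hs).1, key c s (hposA s hs).2]
    have hSpos : ℙ (S ⁻¹' {s}) ≠ 0 := (hposS s hs).ne'
    have hSfin : ℙ (S ⁻¹' {s}) ≠ ⊤ := measure_ne_top _ _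
    rw [ProbabilityTheory.cond, integral_smul_measure, integral_smul_measure]
    simp only [smul_eq_mul]
    rw [← mul_sub, ← integral_sub ((hYint t).integrableOn) ((hYint c).integrableOn)]
    have hs0 : (ℙ (S ⁻¹' {s})).toReal ≠ 0 := by
      simp [ENNReal.toReal_ne_zero, hSpos, hSfin]
    have hI0 : (ℙ (S ⁻¹' ↑I)).toReal ≠ 0 := by
      simp [ENNReal.toReal_ne_zero, hI.ne', measure_ne_top]
    rw [ENNReal.toReal_div, ENNReal.toReal_inv, ENNReal.toReal_inv]
    field_simp
  rw [Finset.sum_congr rfl hrw, ← Finset.mul_sum]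
  have hunion : S ⁻¹' ↑I = ⋃ s ∈ I, S ⁻¹' {s} := by
    ext ω; simp
  have hsum : ∑ s ∈ I, ∫ ω in S ⁻¹' {s}, (Y t ω - Y c ω) ∂ℙ
      = ∫ ω in S ⁻¹' ↑I, (Y t ω - Y c ω) ∂ℙ := by
    rw [hunion]
    exact (integral_biUnion_finset I (fun s _ => hmSset s)
      (fun s₁ _ s₂ _ hne => Set.disjoint_left.2 (fun ω h1 h2 => hne (by
        have e1 : S ω = s₁ := h1
        have e2 : S ω = s₂ := h2
        rw [← e1, e2])))
      (fun s _ => hint.integrableOn)).symm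
  rw [hsum, ProbabilityTheory.cond, integral_smul_measure, smul_eq_mul]
end

section
/- Monotonicity of the MEA variance ratio in the number of variants: for fixed k ≥ 1 and r ∈ (0,1), the function ℓ ↦ ((1+(ℓ−1)r)^k − (1−r)^k)/(ℓ^k(1−(1−r)^k)) is nonincreasing in ℓ ≥ 1 (real-valued ℓ). -/
/-- Shifted power differences: for `0 ≤ a ≤ b` and `0 ≤ c`,
`b^k - a^k ≤ (b+c)^k - (a+c)^k`. -/
lemma pow_sub_pow_le_shift (k : ℕ) (a b c : ℝ) (ha : 0 ≤ a) (hab : a ≤ b)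
    (hc : 0 ≤ c) : b ^ k - a ^ k ≤ (b + c) ^ k - (a + c) ^ k := by
  have h1 : b ^ k - a ^ k = (∑ i ∈ Finset.range k, b ^ i * a ^ (k - 1 - i)) * (b - a) :=
    (geom_sum₂_mul b a k).symm
  have h2 : (b + c) ^ k - (a + c) ^ k
      = (∑ i ∈ Finset.range k, (b + c) ^ i * (a + c) ^ (k - 1 - i)) * ((b + c) - (a + c)) :=
    (geom_sum₂_mul (b + c) (a + c) k).symm
  have hbc : (b + c) - (a + c) = b - a := by ring
  rw [h1, h2, hbc]
  apply mul_le_mul_of_nonneg_right _ (by linarith)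
  apply Finset.sum_le_sum
  intro i _
  have hb : 0 ≤ b := ha.trans hab
  exact mul_le_mul (pow_le_pow_left₀ hb (by linarith) i)
    (pow_le_pow_left₀ ha (by linarith) _) (pow_nonneg ha _) (pow_nonneg (by linarith) _)

/-- Monotonicity of the MEA-to-factorial variance ratio in the number of
variants: for fixed `k ≥ 1` and `r ∈ (0,1)`, the function
`ℓ ↦ ((1+(ℓ−1)r)^k − (1−r)^k) / (ℓ^k (1 − (1−r)^k))`
is nonincreasing on real `ℓ ≥ 1`. -/
theorem mea_variance_ratio_antitone_in_variants
    (k : ℕ) (hk : 1 ≤ k) (r : ℝ) (hr0 : 0 < r) (hr1 : r < 1) :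
    ∀ ℓ₁ ℓ₂ : ℝ, 1 ≤ ℓ₁ → ℓ₁ ≤ ℓ₂ →
      ((1 + (ℓ₂ - 1) * r) ^ k - (1 - r) ^ k) / (ℓ₂ ^ k * (1 - (1 - r) ^ k))
        ≤ ((1 + (ℓ₁ - 1) * r) ^ k - (1 - r) ^ k) / (ℓ₁ ^ k * (1 - (1 - r) ^ k)) := by
  intro ℓ₁ ℓ₂ h1 h12
  have hℓ1 : (0:ℝ) < ℓ₁ := by linarith
  have hℓ2 : (0:ℝ) < ℓ₂ := by linarith
  have hD : 0 < 1 - (1 - r) ^ k := by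
    have : (1 - r) ^ k < 1 := pow_lt_one₀ (by linarith) (by linarith) (by omega)
    linarith
  set s₁ : ℝ := (1 - r) / ℓ₁ with hs₁
  set s₂ : ℝ := (1 - r) / ℓ₂ with hs₂
  have hs2nn : 0 ≤ s₂ := div_nonneg (by linarith) hℓ2.le
  have hs21 : s₂ ≤ s₁ := by
    apply div_le_div_of_nonneg_left (by linarith) hℓ1 h12
  have key : (s₂ + r) ^ k - s₂ ^ k ≤ (s₁ + r) ^ k - s₁ ^ k := by
    have := pow_sub_pow_le_shift k s₂ s₁ r hs2nn hs21 hr0.le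
    linarith
  have e1 : ((1 + (ℓ₁ - 1) * r) ^ k - (1 - r) ^ k) / (ℓ₁ ^ k * (1 - (1 - r) ^ k))
      = ((s₁ + r) ^ k - s₁ ^ k) / (1 - (1 - r) ^ k) := by
    have h : s₁ + r = (1 + (ℓ₁ - 1) * r) / ℓ₁ := by
      rw [hs₁]; field_simp; ring
    rw [h, hs₁, div_pow, div_pow]
    rw [div_sub_div_same, div_div, mul_comm]
  have e2 : ((1 + (ℓ₂ - 1) * r) ^ k - (1 - r) ^ k) / (ℓ₂ ^ k * (1 - (1 - r) ^ k))
      = ((s₂ + r) ^ k - s₂ ^ k) / (1 - (1 - r) ^ k) := by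
    have h : s₂ + r = (1 + (ℓ₂ - 1) * r) / ℓ₂ := by
      rw [hs₂]; field_simp; ring
    rw [h, hs₂, div_pow, div_pow]
    rw [div_sub_div_same, div_div, mul_comm]
  rw [e1, e2]
  gcongr
end
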